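/- Let 0 → A → B → C → 0 be a short exact sequence of commutative groups each of which is divisible-by-finite (the divisible hull has finite index). Then the induced sequence 0 → Â → B̂ → Ĉ → 0 of inverse limits along multiplication maps is exact; in particular the induced map B̂ → Ĉ is surjective. -/

import Mathlib

/-- The inverse limit `Ĝ = lim← (G, [m])`: coherent families `(g_n)_{n : ℕ+}`
with `m • g_{n*m} = g_n`, as a subgroup of the product. -/
def Coherent (G : Type*) [AddCommGroup G] : AddSubgroup (ℕ+ → G) where
  carrier := {g | ∀ n m : ℕ+, (m : ℕ) • g (n * m) = g n}
  zero_mem' := by intro n m; simp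
  add_mem' := by
    intro a b ha hb n m
    simp only [Pi.add_apply, smul_add, ha n m, hb n m]
  neg_mem' := by
    intro a ha n m
    simp only [Pi.neg_apply, smul_neg, ha n m]


/-- Multiplication by `n` as an additive group homomorphism. -/
def nsmulHom (G : Type*) [AddCommGroup G] (n : ℕ) : G →+ G where
  toFun x := n • x
  map_zero' := smul_zero n
  map_add' a b := smul_add n a b

/-- `G` is divisible-by-finite: the divisible hull `G° = ⋂_{n≥1} nG`
has finite index in `G`. -/
def DivisibleByFinite (G : Type*) [AddCommGroup G] : Prop :=
  (⨅ n : ℕ+, (nsmulHom G (n : ℕ)).range).FiniteIndex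

/-- The functorially induced map `Ĝ → Ĥ` on inverse limits. -/
def hatMap {A B : Type*} [AddCommGroup A] [AddCommGroup B] (f : A →+ B) :
    Coherent A →+ Coherent B where
  toFun x := ⟨fun n => f (x.1 n), fun n m => by rw [← map_nsmul, x.2 n m]⟩
  map_zero' := by
    apply Subtype.ext; funext n
    simp
  map_add' a b := by
    apply Subtype.ext; funext n
    simp

namespace Stmt4Aux

def divHull (A : Type*) [AddCommGroup A] : AddSubgroup A :=
  ⨅ n : ℕ+, (nsmulHom A (n : ℕ)).range

variable {A : Type*} [AddCommGroup A]

lemma mem_divHull {x : A} : x ∈ divHull A ↔ ∀ n : ℕ+, ∃ y, (n : ℕ) • y = x := by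
  simp [divHull, AddSubgroup.mem_iInf, AddMonoidHom.mem_range, nsmulHom]

lemma divHull_divisible (hA : (divHull A).FiniteIndex) {x : A} (hx : x ∈ divHull A)
    (n : ℕ+) : ∃ y ∈ divHull A, (n : ℕ) • y = x := by
  have hq : (divHull A).index ≠ 0 := hA.1
  set q : ℕ+ := ⟨(divHull A).index, Nat.pos_of_ne_zero hq⟩ with hqdef
  obtain ⟨z, hz⟩ := mem_divHull.mp hx (n * q)
  refine ⟨(q : ℕ) • z, ?_, ?_⟩
  · exact AddSubgroup.nsmul_index_mem (divHull A) z
  · rw [smul_smul, ← PNat.mul_coe, hz]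

lemma hat_surjective {A B C : Type*} [AddCommGroup A] [AddCommGroup B] [AddCommGroup C]
    (f : A →+ B) (g : B →+ C) (hg : Function.Surjective g) (hfg : Function.Exact f g)
    (hA : (divHull A).FiniteIndex) : Function.Surjective (hatMap g) := by
  intro c
  have hq : (divHull A).index ≠ 0 := hA.1
  set q : ℕ+ := ⟨(divHull A).index, Nat.pos_of_ne_zero hq⟩ with hqdef
  -- transition factors and chain levels
  set t : ℕ → ℕ+ := fun k => q * ⟨k + 1, k.succ_pos⟩ with htdef
  set m : ℕ → ℕ+ := fun k => Nat.rec 1 (fun k mk => mk * t k) k with hmdef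
  have hms : ∀ k, m (k + 1) = m k * t k := fun k => rfl
  -- the chain in C
  set γ : ℕ → C := fun k => c.1 (m k) with hγdef
  have hγ : ∀ k, (t k : ℕ) • γ (k + 1) = γ k := fun k => c.2 (m k) (t k)
  -- lifts
  choose u hu using fun k => hg (γ k)
  -- defects
  have hd : ∀ k, g ((t k : ℕ) • u (k + 1) - u k) = 0 := by
    intro k
    rw [map_sub, map_nsmul, hu, hu, hγ, sub_self]
  choose a ha using fun k => (hfg _).mp (hd k)
  -- the deep parts of defects lie in the divisible hull
  set s : ℕ → A := fun k => ((t k : ℕ) * (t (k + 1) : ℕ)) • a (k + 2) with hsdef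
  have hs : ∀ k, s k ∈ divHull A := by
    intro k
    have hnat : (t k : ℕ) * (t (k + 1) : ℕ) = (q : ℕ) * ((k + 1) * (t (k + 1) : ℕ)) := by
      rw [show (t k : ℕ) = (q : ℕ) * (k + 1) from rfl]
      ring
    have h2 : s k = (q : ℕ) •
        (((k + 1) * (t (k + 1) : ℕ)) • a (k + 2)) := by
      simp only [hsdef]
      rw [smul_smul, ← hnat]
    rw [h2]
    exact AddSubgroup.nsmul_index_mem (divHull A) _
  -- recursive corrections within the divisible hull
  have step : ∀ (k : ℕ) (x : ↥(divHull A)), ∃ y : ↥(divHull A),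
      (t k : ℕ) • (y : A) = (x : A) - s k := by
    intro k x
    obtain ⟨y, hy, hy2⟩ := divHull_divisible hA (AddSubgroup.sub_mem _ x.2 (hs k)) (t k)
    exact ⟨⟨y, hy⟩, hy2⟩
  set R : ℕ → ↥(divHull A) := fun k => Nat.rec 0 (fun k Rk => (step k Rk).choose) k with hRdef
  have hR : ∀ k, (t k : ℕ) • ((R (k + 1) : A)) = (R k : A) - s k := fun k =>
    (step k (R k)).choose_spec
  -- solved corrections
  set α : ℕ → A := fun k => a k + (t k : ℕ) • a (k + 1) + (R k : A) with hαdef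
  have hα : ∀ k, (t k : ℕ) • α (k + 1) = α k - a k := by
    intro k
    simp only [hαdef]
    rw [smul_add, smul_add, smul_smul, hR k]
    simp only [hsdef]
    abel
  -- the corrected chain in B
  set β : ℕ → B := fun k => u k + f (α k) with hβdef
  have hβstep : ∀ k, (t k : ℕ) • β (k + 1) = β k := by
    intro k
    simp only [hβdef]
    rw [smul_add, ← map_nsmul, hα k, map_sub, ha k]
    abel
  have hβg : ∀ k, g (β k) = γ k := by
    intro k
    simp only [hβdef]
    rw [map_add, hu, hfg.apply_apply_eq_zero, add_zero]
  -- divisibility facts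
  have hmle : ∀ k j : ℕ, m k ∣ m (k + j) := by
    intro k j
    induction j with
    | zero => rfl
    | succ j ih => exact ih.trans ⟨t (k + j), rfl⟩
  have hcof : ∀ (jn : ℕ+) (k : ℕ), (jn : ℕ) ≤ k → jn ∣ m k := by
    intro jn k
    induction k with
    | zero => intro h; exact absurd h (by simpa using jn.pos.ne')
    | succ k ih =>
      intro h
      rcases Nat.lt_or_ge (jn : ℕ) (k + 1) with h' | h'
      · exact (ih (Nat.lt_succ_iff.mp h')).trans ⟨t k, rfl⟩
      · have : jn = (⟨k + 1, k.succ_pos⟩ : ℕ+) := by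
          apply PNat.coe_injective
          simpa using le_antisymm h h'
        rw [hms k, this]
        exact Dvd.dvd.mul_left ⟨q, mul_comm _ _⟩ _
  -- well-definedness of the reconstruction
  have W : ∀ (n : ℕ+) (k j : ℕ) (e E : ℕ+), n * e = m k → n * E = m (k + j) →
      (e : ℕ) • β k = (E : ℕ) • β (k + j) := by
    intro n k j
    induction j with
    | zero =>
      intro e E he hE
      rw [Nat.add_zero] at hE ⊢
      have : e = E := by
        apply mul_left_cancel (a := n); rw [he, hE]
      rw [this]
    | succ j ih =>
      intro e E he hE
      obtain ⟨d, hd'⟩ := hmle k j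
      have he' : n * (e * d) = m (k + j) := by rw [← mul_assoc, he, hd']
      have hEeq : E = e * d * t (k + j) := by
        apply mul_left_cancel (a := n)
        rw [hE, ← mul_assoc, he', ← hms]
        congr 1
      rw [ih e (e * d) he he', hEeq]
      show ((e * d : ℕ+) : ℕ) • β (k + j) = ((e * d * t (k + j) : ℕ+) : ℕ) • β ((k + j) + 1)
      rw [PNat.mul_coe (e * d) (t (k + j)), ← smul_smul, hβstep (k + j)]
  -- reconstruction of the full coherent family
  have hcof' : ∀ n : ℕ+, ∃ e : ℕ+, n * e = m (n : ℕ) := by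
    intro n
    obtain ⟨e, he⟩ := hcof n (n : ℕ) le_rfl
    exact ⟨e, he.symm⟩
  choose E hE using hcof'
  set b : ℕ+ → B := fun n => (E n : ℕ) • β ((n : ℕ)) with hbdef
  have hbW : ∀ (n : ℕ+) (k : ℕ) (e' : ℕ+), (n : ℕ) ≤ k → n * e' = m k →
      b n = (e' : ℕ) • β k := by
    intro n k e' hk he'
    have := W n (n : ℕ) (k - (n : ℕ)) (E n) e' (hE n)
      (by rwa [Nat.add_sub_cancel' hk])
    rw [hbdef]
    simpa [Nat.add_sub_cancel' hk] using this
  have hbcoh : ∀ n mm : ℕ+, (mm : ℕ) • b (n * mm) = b n := by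
    intro n mm
    set K : ℕ := ((n * mm : ℕ+) : ℕ) with hK
    have h1 : b (n * mm) = (E (n * mm) : ℕ) • β K := rfl
    have h2 : b n = ((mm * E (n * mm) : ℕ+) : ℕ) • β K := by
      apply hbW n K (mm * E (n * mm))
      · calc (n : ℕ) ≤ (n : ℕ) * (mm : ℕ) := Nat.le_mul_of_pos_right _ mm.pos
          _ = K := by rw [hK, PNat.mul_coe]
      · rw [← mul_assoc]
        exact hE (n * mm)
    rw [h1, h2, PNat.mul_coe, ← smul_smul]
  have hbg : ∀ n : ℕ+, g (b n) = c.1 n := by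
    intro n
    rw [hbdef]
    show g ((E n : ℕ) • β ((n : ℕ))) = c.1 n
    rw [map_nsmul, hβg]
    have hc := c.2 n (E n)
    rw [hE n] at hc
    exact hc
  exact ⟨⟨b, hbcoh⟩, Subtype.ext (funext fun n => hbg n)⟩

end Stmt4Aux


/-- Exactness of `0 → Â → B̂ → Ĉ → 0` induced by a short exact sequence of
divisible-by-finite abelian groups. -/
theorem stmt4 {A B C : Type*} [AddCommGroup A] [AddCommGroup B] [AddCommGroup C]
    (f : A →+ B) (g : B →+ C)
    (hf : Function.Injective f) (hg : Function.Surjective g)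
    (hfg : Function.Exact f g)
    (hA : DivisibleByFinite A) (hB : DivisibleByFinite B) (hC : DivisibleByFinite C) :
    Function.Injective (hatMap f) ∧ Function.Exact (hatMap f) (hatMap g) ∧
      Function.Surjective (hatMap g) := by
  refine ⟨?_, ?_, ?_⟩
  · rw [injective_iff_map_eq_zero]
    intro x hx
    apply Subtype.ext; funext n
    have h := congrFun (congrArg Subtype.val hx) n
    have h1 : x.1 n = 0 := hf (by simpa [hatMap] using h)
    simpa using h1
  · intro y
    constructor
    · intro hy
      have h0 : ∀ n, g (y.1 n) = 0 := by
        intro n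
        have h := congrFun (congrArg Subtype.val hy) n
        simpa [hatMap] using h
      choose a ha using fun n => Set.mem_range.mp ((hfg (y.1 n)).mp (h0 n))
      have hcoh : ∀ n m : ℕ+, (m : ℕ) • a (n * m) = a n := by
        intro n m
        apply hf
        rw [map_nsmul, ha, ha]
        exact y.2 n m
      exact ⟨⟨a, hcoh⟩, Subtype.ext (funext fun n => ha n)⟩
    · rintro ⟨x, rfl⟩
      apply Subtype.ext; funext n
      simpa [hatMap] using hfg.apply_apply_eq_zero (x.1 n)
  · exact Stmt4Aux.hat_surjective f g hg hfg hA
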